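/- Let G be a graph of maximum degree r ≥ 3 whose edges carry i.i.d. weights from a continuous distribution. Then for any edge e and any d ≥ 0, the probability that IB(N(e)) ⊆ N_d(e) is at least 1 − 2(r−1)^{d+1}/(d+1)!. -/

import Mathlib

open MeasureTheory
open scoped ENNReal

variable {V : Type*}

/-- The line graph of `G`: vertices are edges of `G`, two distinct edges being adjacent when
they share an endpoint.  Graph distance in `lineG G` is the paper's edge distance. -/
def lineG (G : SimpleGraph V) : SimpleGraph G.edgeSet where
  Adj e f := e ≠ f ∧ ∃ v : V, v ∈ (e : Sym2 V) ∧ v ∈ (f : Sym2 V)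
  symm := ⟨by
    rintro e f ⟨hne, v, hv1, hv2⟩
    exact ⟨hne.symm, v, hv2, hv1⟩⟩
  loopless := ⟨by rintro e ⟨hne, -⟩; exact hne rfl⟩

/-- The ball `N_d(z)` : vertices at graph distance at most `d` from `z`. -/
def gball {α : Type*} (G : SimpleGraph α) (z : α) (d : ℕ) : Set α :=
  {v | ∃ p : G.Walk z v, p.length ≤ d}

/-- There is a weight-increasing path in `G` from (some vertex of) `Z` to `v`. -/
def IsIncPathFrom {α : Type*} (G : SimpleGraph α) (w : α → ℝ) (Z : Set α) (v : α) : Prop :=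
  ∃ n : ℕ, ∃ p : Fin (n + 1) → α,
    p 0 ∈ Z ∧ p (Fin.last n) = v ∧
    (∀ i : Fin n, G.Adj (p i.castSucc) (p i.succ)) ∧ StrictMono (w ∘ p)

/-- The minimal influence blocking subgraph `IB(Z)`. -/
def IB {α : Type*} (G : SimpleGraph α) (w : α → ℝ) (Z : Set α) : Set α :=
  {v | IsIncPathFrom G w Z v}

lemma other_endpoint (G : SimpleGraph V) (z : G.edgeSet) {x : V} (hx : x ∈ (z : Sym2 V)) :
    ∃ y, y ≠ x ∧ (z : Sym2 V) = s(x, y) := by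
  obtain ⟨zz, hz⟩ := z
  induction zz using Sym2.ind with
  | _ a b =>
    have hab : G.Adj a b := G.mem_edgeSet.1 hz
    rcases Sym2.mem_iff.1 hx with rfl | rfl
    · exact ⟨b, hab.ne', rfl⟩
    · exact ⟨a, hab.ne, Sym2.eq_swap⟩

lemma walk_of_chain {α : Type*} (H : SimpleGraph α) :
    ∀ (n : ℕ) (P : ℕ → α), (∀ i < n, H.Adj (P i) (P (i+1))) →
      ∃ pw : H.Walk (P 0) (P n), pw.length = n := by
  intro n
  induction n with
  | zero => exact fun P _ => ⟨SimpleGraph.Walk.nil, rfl⟩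
  | succ m ih =>
    intro P h
    obtain ⟨pw, hl⟩ := ih P (fun i hi => h i (by omega))
    exact ⟨pw.concat (h m (by omega)), by simp [SimpleGraph.Walk.length_concat, hl]⟩

lemma chain_escape {α : Type*} {H : SimpleGraph α} {z : α} {c d n : ℕ} {P : ℕ → α}
    (h0 : P 0 ∈ gball H z c) (hn : P n ∉ gball H z d)
    (hadj : ∀ i < n, H.Adj (P i) (P (i+1))) : d + 1 ≤ c + n := by
  by_contra h
  push_neg at h
  obtain ⟨w0, hw0⟩ := h0
  obtain ⟨pw, hl⟩ := walk_of_chain H n P hadj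
  exact hn ⟨w0.append pw, by rw [SimpleGraph.Walk.length_append]; omega⟩

lemma adj_of_gball_one {α : Type*} {H : SimpleGraph α} {z a : α}
    (h : a ∈ gball H z 1) (hne : z ≠ a) : H.Adj z a := by
  obtain ⟨pw, hl⟩ := h
  cases pw with
  | nil => exact absurd rfl hne
  | @cons _ b _ h' q =>
    have hq : q.length = 0 := by simp only [SimpleGraph.Walk.length_cons] at hl; omega
    have := q.eq_of_length_eq_zero hq
    subst this
    exact h'



lemma prune (G : SimpleGraph V) (w : G.edgeSet → ℝ) :
    ∀ n : ℕ, ∀ P : ℕ → G.edgeSet,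
      (∀ i < n, (lineG G).Adj (P i) (P (i+1))) →
      (∀ i j, i < j → j ≤ n → w (P i) < w (P j)) →
      ∃ (k : ℕ) (E : ℕ → G.edgeSet) (vtx : ℕ → V),
        (∀ i ≤ k, (E i : Sym2 V) = s(vtx i, vtx (i+1))) ∧
        E 0 = P 0 ∧ E k = P n ∧
        (∀ i j, i < j → j ≤ k → w (E i) < w (E j)) ∧
        (∀ i ≤ k, ∃ j ≤ n, E i = P j) := by
  intro n
  induction n using Nat.strong_induction_on with
  | _ n ih =>
  intro P hadj hw
  by_cases hex : ∃ i, i + 2 ≤ n ∧ ∃ x : V,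
      x ∈ (P i : Sym2 V) ∧ x ∈ (P (i+1) : Sym2 V) ∧ x ∈ (P (i+2) : Sym2 V)
  · obtain ⟨i, hi2, x, hx0, hx1, hx2⟩ := hex
    have hadj' : ∀ j < n - 1,
        (lineG G).Adj ((fun j => if j ≤ i then P j else P (j+1)) j)
          ((fun j => if j ≤ i then P j else P (j+1)) (j+1)) := by
      intro j hj
      simp only []
      rcases lt_trichotomy j i with h | h | h
      · rw [if_pos (le_of_lt h), if_pos (by omega)]
        exact hadj j (by omega)
      · subst h
        rw [if_pos le_rfl, if_neg (by omega)]
        refine ⟨fun hEq => ?_, x, hx0, hx2⟩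
        · have := hw j (j+2) (by omega) (by omega)
          rw [hEq] at this; exact lt_irrefl _ this
      · rw [if_neg (by omega), if_neg (by omega)]
        exact hadj (j+1) (by omega)
    have hw' : ∀ a b, a < b → b ≤ n - 1 →
        w ((fun j => if j ≤ i then P j else P (j+1)) a) <
        w ((fun j => if j ≤ i then P j else P (j+1)) b) := by
      intro a b hab hb
      simp only []
      split <;> split <;> (apply hw <;> omega)
    obtain ⟨k, E, vtx, hcomp, hE0, hEk, hwE, hrange⟩ :=
      ih (n-1) (by omega) _ hadj' hw'
    refine ⟨k, E, vtx, hcomp, ?_, ?_, hwE, ?_⟩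
    · rw [hE0, if_pos (Nat.zero_le i)]
    · rw [hEk, if_neg (by omega)]
      congr 1; omega
    · intro a ha
      obtain ⟨j, hj, hEj⟩ := hrange a ha
      rw [hEj]
      split
      · exact ⟨j, by omega, rfl⟩
      · exact ⟨j+1, by omega, rfl⟩
  · push_neg at hex
    obtain ⟨⟨a0, b0⟩, hrep⟩ := Quot.exists_rep ((P 0 : Sym2 V))
    rcases Nat.eq_zero_or_pos n with rfl | hn
    · refine ⟨0, P, fun i => if i = 0 then a0 else b0, ?_, rfl, rfl, ?_, ?_⟩
      · intro i hi
        interval_cases i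
        simp only [if_pos rfl, if_neg (one_ne_zero)]
        exact hrep.symm
      · intro i j hij hj; omega
      · intro i hi; exact ⟨0, le_rfl, by interval_cases i; rfl⟩
    · haveI : Nonempty V := ⟨a0⟩
      have hu : ∀ i, i < n → ∃ x : V, x ∈ (P i : Sym2 V) ∧ x ∈ (P (i+1) : Sym2 V) := by
        intro i hi; exact (hadj i hi).2
      set u : ℕ → V := fun i => if h : i < n then (hu i h).choose else a0 with hu_def
      have huP : ∀ i (h : i < n), u i ∈ (P i : Sym2 V) ∧ u i ∈ (P (i+1) : Sym2 V) := by
        intro i h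
        simp only [hu_def, dif_pos h]
        exact (hu i h).choose_spec
      obtain ⟨y0, hy0ne, hy0⟩ := other_endpoint G (P 0) (huP 0 hn).1
      have hun : u (n-1) ∈ (P n : Sym2 V) := by
        have := (huP (n-1) (by omega)).2
        rwa [show n - 1 + 1 = n by omega] at this
      obtain ⟨yn, hynne, hyn⟩ := other_endpoint G (P n) hun
      refine ⟨n, P, fun i => if i = 0 then y0 else if i ≤ n then u (i-1) else yn,
        ?_, rfl, rfl, fun i j hij hj => hw i j hij hj, fun i hi => ⟨i, hi, rfl⟩⟩
      intro i hi
      simp only []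
      rcases Nat.eq_zero_or_pos i with rfl | hipos
      · rw [if_pos rfl, if_neg (by omega : ¬ (0:ℕ)+1 = 0), if_pos (by omega : 0+1 ≤ n)]
        simp only [Nat.add_sub_cancel]
        rw [hy0, Sym2.eq_swap]
      · rcases Nat.lt_or_ge i n with hilt | hige
        · -- 0 < i < n
          rw [if_neg (by omega), if_pos (by omega), if_neg (by omega), if_pos (by omega)]
          simp only [Nat.add_sub_cancel]
          have h1 : u (i-1) ∈ (P i : Sym2 V) := by
            have := (huP (i-1) (by omega)).2
            rwa [show i - 1 + 1 = i by omega] at this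
          have h2 : u i ∈ (P i : Sym2 V) := (huP i hilt).1
          have hne : u (i-1) ≠ u i := by
            intro hEq
            refine hex (i-1) (by omega) (u i) ?_ ?_ ?_
            · rw [← hEq]; exact (huP (i-1) (by omega)).1
            · rwa [show i - 1 + 1 = i by omega]
            · rw [show i - 1 + 2 = i + 1 by omega]
              exact (huP i hilt).2
          exact ((Sym2.mem_and_mem_iff hne).1 ⟨h1, h2⟩)
        · -- i = n
          have : i = n := by omega
          subst this
          rw [if_neg (by omega), if_pos le_rfl, if_neg (by omega), if_neg (by omega)]
          exact hyn



def tmpl [Fintype V] [DecidableEq V] (G : SimpleGraph V) (e : G.edgeSet) (k : ℕ)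
    (t : Fin (k+2) → V) : Prop :=
  t ⟨0, by omega⟩ ∈ (e : Sym2 V) ∧
  (∀ i : ℕ, (h : i + 1 < k + 2) → G.Adj (t ⟨i, by omega⟩) (t ⟨i+1, h⟩)) ∧
  s(t ⟨0, by omega⟩, t ⟨1, by omega⟩) ≠ (e : Sym2 V) ∧
  (∀ i : ℕ, (h : i + 2 < k + 2) → t ⟨i+2, h⟩ ≠ t ⟨i, by omega⟩)

noncomputable def tmplFinset [Fintype V] [DecidableEq V] (G : SimpleGraph V) (e : G.edgeSet)
    (k : ℕ) : Finset (Fin (k+2) → V) :=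
  @Finset.filter _ (tmpl G e k) (Classical.decPred _) Finset.univ

lemma mem_tmplFinset [Fintype V] [DecidableEq V] {G : SimpleGraph V} {e : G.edgeSet} {k : ℕ}
    {t : Fin (k+2) → V} : t ∈ tmplFinset G e k ↔ tmpl G e k t := by
  classical
  simp [tmplFinset]

lemma tmpl_card [Fintype V] [DecidableEq V] (G : SimpleGraph V) [DecidableRel G.Adj]
    (e : G.edgeSet) (r : ℕ) (hdeg : ∀ v, G.degree v ≤ r) :
    ∀ k : ℕ, (tmplFinset G e k).card ≤ 2 * (r - 1) ^ (k + 1) := by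
  classical
  have hnbhd : ∀ (b c : V), G.Adj b c →
      (G.neighborFinset b \ {c}).card ≤ r - 1 := by
    intro b c hbc
    rw [Finset.sdiff_singleton_eq_erase,
      Finset.card_erase_of_mem (by rwa [SimpleGraph.mem_neighborFinset])]
    have := hdeg b
    rw [← SimpleGraph.card_neighborFinset_eq_degree] at this
    omega
  intro k
  induction k with
  | zero =>
    have := Finset.card_le_mul_card_image (f := fun t : Fin 2 → V => t 0)
      (tmplFinset G e 0) (r - 1) ?_
    · refine le_trans this ?_
      have himg : ((tmplFinset G e 0).image (fun t : Fin 2 → V => t 0)).card ≤ 2 := by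
        obtain ⟨⟨a, b⟩, hrep⟩ := Quot.exists_rep ((e : Sym2 V))
        have hsub : ((tmplFinset G e 0).image (fun t : Fin 2 → V => t 0)) ⊆ {a, b} := by
          intro x hx
          simp only [Finset.mem_image] at hx
          obtain ⟨t, ht, rfl⟩ := hx
          have h0 := (mem_tmplFinset.1 ht).1
          rw [← hrep] at h0
          rcases Sym2.mem_iff.1 h0 with h | h
          · exact Finset.mem_insert.2 (Or.inl h)
          · exact Finset.mem_insert.2 (Or.inr (Finset.mem_singleton.2 h))
        exact le_trans (Finset.card_le_card hsub)
          (le_trans (Finset.card_insert_le a {b}) (by simp))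
      calc (r-1) * ((tmplFinset G e 0).image _).card ≤ (r-1) * 2 :=
            Nat.mul_le_mul_left _ himg
        _ = 2 * (r-1)^(0+1) := by ring
    · intro b hb
      simp only [Finset.mem_image] at hb
      obtain ⟨t0, ht0, hb0⟩ := hb
      have hbe : b ∈ (e : Sym2 V) := hb0 ▸ (mem_tmplFinset.1 ht0).1
      obtain ⟨c, hcne, hce⟩ := other_endpoint G e hbe
      have hbc : G.Adj b c := G.mem_edgeSet.1 (by rw [← hce]; exact e.2)
      refine le_trans (Finset.card_le_card_of_injOn (fun t : Fin 2 → V => t 1) ?_ ?_)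
        (hnbhd b c hbc)
      · intro t ht
        simp only [Finset.mem_coe, Finset.mem_filter] at ht ⊢
        obtain ⟨ht, ht0⟩ := ht
        obtain ⟨h0, hadj, hne, hnb⟩ := mem_tmplFinset.1 ht
        rw [Finset.mem_sdiff, SimpleGraph.mem_neighborFinset]
        constructor
        · rw [← ht0]; exact hadj 0 (by omega)
        · simp only [Finset.mem_singleton]
          intro h1
          apply hne
          show s(t 0, t 1) = (e : Sym2 V)
          rw [ht0, h1, hce]
      · intro t ht t' ht' h1
        simp only [Finset.mem_coe, Finset.mem_filter] at ht ht'
        funext i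
        have : i = 0 ∨ i = 1 := by omega
        rcases this with rfl | rfl
        · rw [ht.2, ht'.2]
        · exact h1
  | succ k ihk =>
    have hres : ∀ t ∈ tmplFinset G e (k+1),
        (t ∘ Fin.castSucc) ∈ tmplFinset G e k := by
      intro t ht
      obtain ⟨h0, hadj, hne, hnb⟩ := mem_tmplFinset.1 ht
      refine mem_tmplFinset.2 ⟨h0, ?_, hne, ?_⟩
      · intro i h
        exact hadj i (by omega)
      · intro i h
        exact hnb i (by omega)
    have := Finset.card_le_mul_card_image (f := fun t : Fin (k+3) → V => t ∘ Fin.castSucc)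
      (tmplFinset G e (k+1)) (r - 1) ?_
    · refine le_trans this ?_
      have himg : ((tmplFinset G e (k+1)).image (fun t => t ∘ Fin.castSucc)).card ≤
          (tmplFinset G e k).card := by
        apply Finset.card_le_card
        intro b hb
        simp only [Finset.mem_image] at hb
        obtain ⟨t, ht, rfl⟩ := hb
        exact hres t ht
      calc (r-1) * _ ≤ (r-1) * (tmplFinset G e k).card := Nat.mul_le_mul_left _ himg
        _ ≤ (r-1) * (2 * (r-1)^(k+1)) := Nat.mul_le_mul_left _ ihk
        _ = 2 * (r-1)^(k+1+1) := by ring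
    · intro b hb
      simp only [Finset.mem_image] at hb
      obtain ⟨t0, ht0, hb0⟩ := hb
      have hbT : b ∈ tmplFinset G e k := hb0 ▸ hres t0 ht0
      obtain ⟨hb0', hbadj, hbne, hbnb⟩ := mem_tmplFinset.1 hbT
      have hadjb : G.Adj (b ⟨k+1, by omega⟩) (b ⟨k, by omega⟩) :=
        (hbadj k (by omega)).symm
      refine le_trans (Finset.card_le_card_of_injOn
        (fun t => t ⟨k+2, by omega⟩) ?_ ?_) (hnbhd _ _ hadjb)
      · intro t ht
        simp only [Finset.mem_coe, Finset.mem_filter] at ht ⊢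
        obtain ⟨ht, htb⟩ := ht
        obtain ⟨h0, hadj, hne, hnb⟩ := mem_tmplFinset.1 ht
        rw [Finset.mem_sdiff, SimpleGraph.mem_neighborFinset]
        have hc1 : t ⟨k+1, by omega⟩ = b ⟨k+1, by omega⟩ := by
          rw [← htb]; rfl
        have hc0 : t ⟨k, by omega⟩ = b ⟨k, by omega⟩ := by
          rw [← htb]; rfl
        constructor
        · rw [← hc1]; exact hadj (k+1) (by omega)
        · simp only [Finset.mem_singleton]
          rw [← hc0]
          exact hnb k (by omega)
      · intro t ht t' ht' h1
        simp only [Finset.mem_coe, Finset.mem_filter] at ht ht'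
        funext i
        rcases Nat.lt_or_ge i.val (k+2) with hiv | hiv
        · have h2 := congrFun (ht.2.trans ht'.2.symm) (⟨i.val, hiv⟩ : Fin (k+2))
          have h3 : i = Fin.castSucc ⟨i.val, hiv⟩ := Fin.ext rfl
          rw [h3]
          exact h2
        · have h3 : i = ⟨k+2, by omega⟩ := Fin.ext (by simp only [Fin.val_mk]; omega)
          rw [h3]; exact h1


lemma order_event_measure {ι : Type*} [Fintype ι] [DecidableEq ι] (ν : Measure ℝ)
    [IsProbabilityMeasure ν] (m : ℕ) (f : Fin m → ι) :
    Measure.pi (fun _ : ι => ν) {w : ι → ℝ | ∀ i j : Fin m, i < j → w (f i) < w (f j)} ≤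
      ((Nat.factorial m : ℕ) : ℝ≥0∞)⁻¹ := by
  classical
  set μ := Measure.pi (fun _ : ι => ν) with hμ
  haveI : IsProbabilityMeasure μ := by
    constructor
    rw [hμ, Measure.pi_univ]
    simp
  by_cases hf : Function.Injective f
  · set Ev : Equiv.Perm (Fin m) → Set (ι → ℝ) :=
      fun σ => {w | ∀ i j : Fin m, i < j → w (f (σ i)) < w (f (σ j))} with hEv
    have hmeas : ∀ σ, MeasurableSet (Ev σ) := by
      intro σ
      have : Ev σ = ⋂ (i : Fin m) (j : Fin m) (_ : i < j),
          {w : ι → ℝ | w (f (σ i)) < w (f (σ j))} := by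
        ext w; simp [hEv]
      rw [this]
      exact MeasurableSet.iInter fun i => MeasurableSet.iInter fun j =>
        MeasurableSet.iInter fun _ =>
          measurableSet_lt (measurable_pi_apply _) (measurable_pi_apply _)
    have hstrict : ∀ σ w, w ∈ Ev σ → StrictMono (fun i => w (f (σ i))) := by
      intro σ w hw a b hab
      exact hw a b hab
    have hdisj : (↑(Finset.univ : Finset (Equiv.Perm (Fin m))) : Set (Equiv.Perm (Fin m))).PairwiseDisjoint Ev := by
      intro σ _ τ _ hne
      rw [Function.onFun, Set.disjoint_left]
      intro w hwσ hwτ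
      apply hne
      have hσ := hstrict σ w hwσ
      have hτ := hstrict τ w hwτ
      set π : Equiv.Perm (Fin m) := τ.trans σ.symm with hπ
      have hπs : StrictMono (π : Fin m → Fin m) := by
        intro a b hab
        have h1 : w (f (τ a)) < w (f (τ b)) := hτ hab
        have h2 : ∀ c : Fin m, w (f (σ (π c))) = w (f (τ c)) := by
          intro c; simp [hπ]
        rw [← h2 a, ← h2 b] at h1
        exact hσ.lt_iff_lt.1 h1
      have hπinv : StrictMono ((π.symm : Fin m → Fin m)) := by
        intro a b hab
        rcases lt_trichotomy (π.symm a) (π.symm b) with h | h | h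
        · exact h
        · exfalso; rw [← π.apply_symm_apply a, ← π.apply_symm_apply b, h] at hab
          exact lt_irrefl _ hab
        · exfalso
          have := hπs h
          rw [π.apply_symm_apply, π.apply_symm_apply] at this
          exact lt_irrefl _ (this.trans hab)
      haveI : WellFoundedLT (Fin m) := Finite.to_wellFoundedLT
      have hid : ∀ i, π i = i := by
        intro i
        have h1 : i ≤ π i := hπs.le_apply
        have h2 : π i ≤ π.symm (π i) := hπinv.le_apply
        rw [π.symm_apply_apply] at h2
        exact le_antisymm h2 h1
      refine Equiv.ext fun i => ?_
      have h3 : σ (π i) = σ i := by rw [hid i]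
      have h4 : σ (σ.symm (τ i)) = σ i := h3
      rw [σ.apply_symm_apply] at h4
      exact h4.symm
    have hsum := measure_biUnion_finset (μ := μ) hdisj (fun σ _ => hmeas σ)
    have heq : ∀ σ, μ (Ev σ) = μ (Ev 1) := by
      intro σ
      set femb : Fin m ↪ ι := ⟨f, hf⟩ with hfemb
      set π : Equiv.Perm ι := σ.viaFintypeEmbedding femb with hπ
      have hmp : MeasurePreserving (MeasurableEquiv.piCongrLeft (fun _ : ι => ℝ) π)
          (Measure.pi fun _ : ι => ν) (Measure.pi fun _ : ι => ν) :=
        measurePreserving_piCongrLeft (fun _ : ι => ν) π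
      have happ : ∀ (w : ι → ℝ) (i : Fin m),
          (MeasurableEquiv.piCongrLeft (fun _ : ι => ℝ) π) w (f (σ i)) = w (f i) := by
        intro w i
        have h1 : π (f i) = f (σ i) := Equiv.Perm.viaFintypeEmbedding_apply_image σ femb i
        rw [← h1]
        exact MeasurableEquiv.piCongrLeft_apply_apply (β := fun _ : ι => ℝ) π w (f i)
      have hpre : (MeasurableEquiv.piCongrLeft (fun _ : ι => ℝ) π) ⁻¹' (Ev σ) = Ev 1 := by
        ext w
        simp only [Set.mem_preimage, hEv, Set.mem_setOf_eq, Equiv.Perm.coe_one, id_eq]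
        constructor
        · intro h i j hij
          have := h i j hij
          rwa [happ w i, happ w j] at this
        · intro h i j hij
          rw [happ w i, happ w j]
          exact h i j hij
      rw [hμ]
      calc (Measure.pi fun _ : ι => ν) (Ev σ)
          = (Measure.pi fun _ : ι => ν)
            ((MeasurableEquiv.piCongrLeft (fun _ : ι => ℝ) π) ⁻¹' (Ev σ)) :=
            (hmp.measure_preimage (hmeas σ).nullMeasurableSet).symm
        _ = (Measure.pi fun _ : ι => ν) (Ev 1) := by rw [hpre]
    have hle1 : ∑ σ : Equiv.Perm (Fin m), μ (Ev σ) ≤ 1 := by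
      rw [← hsum]; exact prob_le_one
    rw [Finset.sum_congr rfl (fun σ _ => heq σ), Finset.sum_const, Finset.card_univ] at hle1
    have hcard : Fintype.card (Equiv.Perm (Fin m)) = Nat.factorial m := by
      rw [Fintype.card_perm, Fintype.card_fin]
    rw [hcard, nsmul_eq_mul] at hle1
    have htarget : {w : ι → ℝ | ∀ i j : Fin m, i < j → w (f i) < w (f j)} = Ev 1 := by
      ext w; simp [hEv]
    rw [htarget]
    exact ENNReal.le_inv_iff_mul_le.2 (by rwa [mul_comm])
  · have hempty : {w : ι → ℝ | ∀ i j : Fin m, i < j → w (f i) < w (f j)} = ∅ := by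
      rw [Set.eq_empty_iff_forall_notMem]
      intro w hw
      rw [Function.not_injective_iff] at hf
      obtain ⟨i, j, hfij, hne⟩ := hf
      rcases lt_or_gt_of_ne hne with h | h
      · exact absurd (hw i j h) (by rw [hfij]; exact lt_irrefl _)
      · exact absurd (hw j i h) (by rw [hfij]; exact lt_irrefl _)
    rw [hempty]
    simp



def tmplEvent [Fintype V] [DecidableEq V] (G : SimpleGraph V) (d : ℕ) (t : Fin (d+2) → V) :
    Set (G.edgeSet → ℝ) :=
  {w | ∀ (i j : ℕ) (hj : j < d + 1) (hij : i < j)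
      (hi' : s(t ⟨i, by omega⟩, t ⟨i+1, by omega⟩) ∈ G.edgeSet)
      (hj' : s(t ⟨j, by omega⟩, t ⟨j+1, by omega⟩) ∈ G.edgeSet),
      w ⟨s(t ⟨i, by omega⟩, t ⟨i+1, by omega⟩), hi'⟩ <
        w ⟨s(t ⟨j, by omega⟩, t ⟨j+1, by omega⟩), hj'⟩}

lemma template_extract [Fintype V] [DecidableEq V] (G : SimpleGraph V) (e : G.edgeSet)
    (d : ℕ) (w : G.edgeSet → ℝ) (k : ℕ) (E : ℕ → G.edgeSet) (vtx : ℕ → V)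
    (hcomp : ∀ i ≤ k, (E i : Sym2 V) = s(vtx i, vtx (i+1)))
    (hwE : ∀ i j, i < j → j ≤ k → w (E i) < w (E j))
    (c : ℕ) (hck : c + d ≤ k)
    (hv : vtx c ∈ (e : Sym2 V)) (hcE : E c ≠ e) :
    (fun i : Fin (d+2) => vtx (c + i.val)) ∈ tmplFinset G e d ∧
    w ∈ tmplEvent G d (fun i : Fin (d+2) => vtx (c + i.val)) := by
  have hedge : ∀ i : ℕ, i ≤ d → s(vtx (c+i), vtx (c+i+1)) ∈ G.edgeSet := by
    intro i hi
    have h2 := (E (c+i)).2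
    rw [hcomp (c+i) (by omega)] at h2
    exact h2
  constructor
  · refine mem_tmplFinset.2 ⟨?_, ?_, ?_, ?_⟩
    · exact hv
    · intro i h
      exact G.mem_edgeSet.1 (hedge i (by omega))
    · intro hEq
      apply hcE
      apply Subtype.ext
      rw [hcomp c (by omega)]
      exact hEq
    · intro i h hEq
      have hEq' : vtx (c + (i+2)) = vtx (c + i) := hEq
      have h1 : (E (c+i+1) : Sym2 V) = (E (c+i) : Sym2 V) := by
        rw [hcomp (c+i+1) (by omega), hcomp (c+i) (by omega)]
        show s(vtx (c+i+1), vtx (c+(i+2))) = _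
        rw [hEq', Sym2.eq_swap]
      have h2 : E (c+i+1) = E (c+i) := Subtype.ext h1
      have := hwE (c+i) (c+i+1) (by omega) (by omega)
      rw [h2] at this
      exact lt_irrefl _ this
  · intro i j hj hij hi' hj'
    have hEi : (⟨s(vtx (c+i), vtx (c+i+1)), hi'⟩ : G.edgeSet) = E (c+i) :=
      Subtype.ext (hcomp (c+i) (by omega)).symm
    have hEj : (⟨s(vtx (c+j), vtx (c+j+1)), hj'⟩ : G.edgeSet) = E (c+j) :=
      Subtype.ext (hcomp (c+j) (by omega)).symm
    show w ⟨s(vtx (c+i), vtx (c+i+1)), hi'⟩ < w ⟨s(vtx (c+j), vtx (c+j+1)), hj'⟩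
    rw [hEi, hEj]
    exact hwE (c+i) (c+j) (by omega) (by omega)

lemma chain_adj (G : SimpleGraph V) (w : G.edgeSet → ℝ) {k : ℕ} {E : ℕ → G.edgeSet}
    {vtx : ℕ → V}
    (hcomp : ∀ i ≤ k, (E i : Sym2 V) = s(vtx i, vtx (i+1)))
    (hwE : ∀ i j, i < j → j ≤ k → w (E i) < w (E j)) :
    ∀ i < k, (lineG G).Adj (E i) (E (i+1)) := by
  intro i hi
  refine ⟨fun hEq => ?_, vtx (i+1), ?_, ?_⟩
  · have := hwE i (i+1) (by omega) (by omega)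
    rw [hEq] at this
    exact lt_irrefl _ this
  · rw [hcomp i (by omega)]
    exact Sym2.mem_iff.2 (Or.inr rfl)
  · rw [hcomp (i+1) (by omega)]
    exact Sym2.mem_iff.2 (Or.inl rfl)

/-- For a graph of maximum degree `r ≥ 3` with i.i.d. continuous edge weights, for any edge
`e` and any `d ≥ 0`, `P(IB(N(e)) ⊆ N_d(e)) ≥ 1 − 2(r−1)^{d+1}/(d+1)!`. -/
theorem IB_ball_probability_edges [Fintype V] [DecidableEq V] (G : SimpleGraph V)
    [DecidableRel G.Adj] (r : ℕ) (hr : 3 ≤ r) (hdeg : ∀ v, G.degree v ≤ r)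
    (e : G.edgeSet) (d : ℕ) (ν : Measure ℝ) [IsProbabilityMeasure ν] [NullSingletonClass ν] :
    1 - ((2 * (r - 1) ^ (d + 1) : ℕ) : ℝ≥0∞) / ((Nat.factorial (d + 1) : ℕ) : ℝ≥0∞) ≤
      (Measure.pi fun _ : G.edgeSet => ν)
        {w : G.edgeSet → ℝ | IB (lineG G) w (gball (lineG G) e 1) ⊆ gball (lineG G) e d} := by
  classical
  rcases Nat.eq_zero_or_pos d with rfl | hd
  · have h1 : (1:ℝ≥0∞) ≤ ((2 * (r - 1) ^ (0 + 1) : ℕ) : ℝ≥0∞) /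
        ((Nat.factorial (0 + 1) : ℕ) : ℝ≥0∞) := by
      have hfac : (Nat.factorial (0 + 1) : ℕ) = 1 := rfl
      rw [hfac, Nat.cast_one, div_one]
      have hnat : (1:ℕ) ≤ 2 * (r - 1) ^ (0 + 1) := by
        rw [pow_one]; omega
      exact_mod_cast hnat
    rw [tsub_eq_zero_of_le h1]
    exact zero_le
  · set μ := Measure.pi (fun _ : G.edgeSet => ν) with hμ
    haveI hprob : IsProbabilityMeasure μ := by
      constructor
      rw [hμ, Measure.pi_univ]
      simp
    set S := {w : G.edgeSet → ℝ |
      IB (lineG G) w (gball (lineG G) e 1) ⊆ gball (lineG G) e d} with hS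
    have hsub : Sᶜ ⊆ ⋃ t ∈ tmplFinset G e d, tmplEvent G d t := by
      intro w hw
      have hw' : ¬ (IB (lineG G) w (gball (lineG G) e 1) ⊆ gball (lineG G) e d) := hw
      obtain ⟨a, ha, hna⟩ := Set.not_subset.1 hw'
      obtain ⟨n, p, hp0, hpl, hpadj, hpws⟩ := ha
      set P : ℕ → G.edgeSet := fun i => p ⟨min i n, Nat.lt_succ_of_le (Nat.min_le_right i n)⟩ with hPdef
      have hPi : ∀ i, (hi : i ≤ n) → P i = p ⟨i, by omega⟩ := by
        intro i hi
        simp only [hPdef]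
        congr 1
        exact Fin.ext (by simp only [Fin.val_mk]; omega)
      have hPadj : ∀ i < n, (lineG G).Adj (P i) (P (i+1)) := by
        intro i hi
        rw [hPi i (by omega), hPi (i+1) (by omega)]
        have := hpadj ⟨i, hi⟩
        rwa [Fin.castSucc_mk, Fin.succ_mk] at this
      have hPw : ∀ i j, i < j → j ≤ n → w (P i) < w (P j) := by
        intro i j hij hj
        rw [hPi i (by omega), hPi j hj]
        exact hpws (Fin.mk_lt_mk.2 hij)
      have hP0 : P 0 = p 0 := by
        rw [hPi 0 (by omega)]
        congr 1
      have hPn : P n = a := by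
        rw [hPi n le_rfl, ← hpl]
        congr 1
      by_cases hcase : ∃ j, j ≤ n ∧ P j = e
      · obtain ⟨j0, hj0, hje⟩ := hcase
        obtain ⟨k, E, vtx, hcomp, hE0, hEk, hwE, hrange⟩ :=
          prune G w (n - j0) (fun i => P (j0 + i))
            (fun i hi => hPadj (j0+i) (by omega))
            (fun i j hij hj => hPw (j0+i) (j0+j) (by omega) (by omega))
        have hE0e : E 0 = e := hE0.trans hje
        have hEka : E k = a := by
          rw [hEk]
          show P (j0 + (n - j0)) = a
          rw [show j0 + (n - j0) = n from by omega, hPn]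
        have hEadj := chain_adj G w hcomp hwE
        have hk : d + 1 ≤ k := by
          have h0 : E 0 ∈ gball (lineG G) e 0 := by
            rw [hE0e]; exact ⟨SimpleGraph.Walk.nil, le_rfl⟩
          have hn' : E k ∉ gball (lineG G) e d := by rw [hEka]; exact hna
          have := chain_escape h0 hn' hEadj
          omega
        have hE1e : E 1 ≠ e := by
          intro hEq
          have := hwE 0 1 (by omega) (by omega)
          rw [hEq, hE0e] at this
          exact lt_irrefl _ this
        have hv1 : vtx 1 ∈ (e : Sym2 V) := by
          have hc := hcomp 0 (by omega)
          rw [hE0e] at hc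
          rw [hc]
          exact Sym2.mem_iff.2 (Or.inr rfl)
        obtain ⟨hT, hEv⟩ := template_extract G e d w k E vtx hcomp hwE 1 (by omega) hv1 hE1e
        exact Set.mem_biUnion hT hEv
      · push_neg at hcase
        obtain ⟨k, E, vtx, hcomp, hE0, hEk, hwE, hrange⟩ := prune G w n P hPadj hPw
        have hEka : E k = a := hEk.trans hPn
        have hEne : ∀ i, i ≤ k → E i ≠ e := by
          intro i hi
          obtain ⟨j, hj, hEj⟩ := hrange i hi
          rw [hEj]; exact hcase j hj
        have hEadj := chain_adj G w hcomp hwE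
        have hP0g : P 0 ∈ gball (lineG G) e 1 := by rw [hP0]; exact hp0
        have hadj0 : (lineG G).Adj e (P 0) :=
          adj_of_gball_one hP0g (fun h => hcase 0 (by omega) h.symm)
        obtain ⟨hne0, x, hxe, hxP0⟩ := hadj0
        have hxE0 : x ∈ (E 0 : Sym2 V) := by rw [hE0]; exact hxP0
        rw [hcomp 0 (by omega)] at hxE0
        have hk0 : d ≤ k := by
          have h0 : E 0 ∈ gball (lineG G) e 1 := by rw [hE0]; exact hP0g
          have hn' : E k ∉ gball (lineG G) e d := by rw [hEka]; exact hna
          have := chain_escape h0 hn' hEadj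
          omega
        rcases Sym2.mem_iff.1 hxE0 with hx | hx
        · obtain ⟨hT, hEv⟩ := template_extract G e d w k E vtx hcomp hwE 0 (by omega)
            (by rw [show vtx 0 = vtx (0 + 0) from rfl, ← hx]; exact hxe) (hEne 0 (by omega))
          exact Set.mem_biUnion hT hEv
        · have hk1 : d + 1 ≤ k := by
            rcases Nat.eq_zero_or_pos k with rfl | hkpos
            · exfalso
              apply hna
              have haP : a = p 0 := ((hEka.symm.trans hE0).trans hP0)
              rw [haP]
              obtain ⟨pw, hl⟩ := hp0
              exact ⟨pw, hl.trans hd⟩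
            · have hadj1 : (lineG G).Adj e (E 1) := by
                refine ⟨fun h => hEne 1 (by omega) h.symm, x, hxe, ?_⟩
                rw [hcomp 1 (by omega), hx]
                exact Sym2.mem_iff.2 (Or.inl rfl)
              have h0 : E (1 + 0) ∈ gball (lineG G) e 1 :=
                ⟨SimpleGraph.Walk.cons hadj1 SimpleGraph.Walk.nil, by simp⟩
              have hn' : E (1 + (k-1)) ∉ gball (lineG G) e d := by
                rw [show 1 + (k-1) = k from by omega, hEka]
                exact hna
              have := chain_escape (P := fun i => E (1 + i)) (c := 1) (n := k - 1)
                h0 hn' (fun i hi => hEadj (1+i) (by omega))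
              omega
          obtain ⟨hT, hEv⟩ := template_extract G e d w k E vtx hcomp hwE 1 (by omega)
            (by rw [← hx]; exact hxe) (hEne 1 (by omega))
          exact Set.mem_biUnion hT hEv
    have hA : ∀ t ∈ tmplFinset G e d,
        μ (tmplEvent G d t) ≤ ((Nat.factorial (d+1) : ℕ) : ℝ≥0∞)⁻¹ := by
      intro t ht
      obtain ⟨h0, hadj, hne, hnb⟩ := mem_tmplFinset.1 ht
      set F : Fin (d+1) → G.edgeSet := fun i =>
        ⟨s(t ⟨i.val, by omega⟩, t ⟨i.val+1, by omega⟩),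
          G.mem_edgeSet.2 (hadj i.val (by omega))⟩ with hF
      have hsub2 : tmplEvent G d t ⊆
          {w : G.edgeSet → ℝ | ∀ i j : Fin (d+1), i < j → w (F i) < w (F j)} := by
        intro w hw i j hij
        exact hw i.val j.val j.isLt hij (F i).2 (F j).2
      calc μ (tmplEvent G d t) ≤ μ {w : G.edgeSet → ℝ |
            ∀ i j : Fin (d+1), i < j → w (F i) < w (F j)} := measure_mono hsub2
        _ ≤ ((Nat.factorial (d+1) : ℕ) : ℝ≥0∞)⁻¹ := by
            rw [hμ]
            exact order_event_measure ν (d+1) F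
    have hbound : μ Sᶜ ≤ ((2 * (r - 1) ^ (d + 1) : ℕ) : ℝ≥0∞) /
        ((Nat.factorial (d + 1) : ℕ) : ℝ≥0∞) := by
      calc μ Sᶜ ≤ μ (⋃ t ∈ tmplFinset G e d, tmplEvent G d t) := measure_mono hsub
        _ ≤ ∑ t ∈ tmplFinset G e d, μ (tmplEvent G d t) := measure_biUnion_finset_le _ _
        _ ≤ ∑ _t ∈ tmplFinset G e d, ((Nat.factorial (d+1) : ℕ) : ℝ≥0∞)⁻¹ :=
            Finset.sum_le_sum hA
        _ = ((tmplFinset G e d).card : ℝ≥0∞) * ((Nat.factorial (d+1) : ℕ) : ℝ≥0∞)⁻¹ := by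
            rw [Finset.sum_const, nsmul_eq_mul]
        _ ≤ ((2 * (r - 1) ^ (d + 1) : ℕ) : ℝ≥0∞) * ((Nat.factorial (d+1) : ℕ) : ℝ≥0∞)⁻¹ := by
            apply mul_le_mul_left
            exact_mod_cast tmpl_card G e r hdeg d
        _ = ((2 * (r - 1) ^ (d + 1) : ℕ) : ℝ≥0∞) / ((Nat.factorial (d + 1) : ℕ) : ℝ≥0∞) := by
            rw [ENNReal.div_eq_inv_mul, mul_comm]
    have h1 : (1:ℝ≥0∞) ≤ μ S + μ Sᶜ := by
      have hu : μ Set.univ = 1 := measure_univ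
      rw [← hu, ← Set.union_compl_self S]
      exact measure_union_le _ _
    calc 1 - ((2 * (r - 1) ^ (d + 1) : ℕ) : ℝ≥0∞) / ((Nat.factorial (d + 1) : ℕ) : ℝ≥0∞)
        ≤ 1 - μ Sᶜ := tsub_le_tsub_left hbound 1
      _ ≤ μ S := tsub_le_iff_right.2 h1
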